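/- Let R be a commutative ring, n ≥ 2 an even integer, and f, g ∈ R[x] of degree < n. For every integer k with n/2 < k ≤ n − 1, the k-th coefficient of the product of f and g in R[x]/(x^n − x^{n/2} + 1) is h_k = a_k + a_{k+n/2}. -/

import Mathlib

open Polynomial

/-- `a_d = Σ_{i+j=d, 0 ≤ i,j ≤ n−1} f_i g_j`. -/
def convCoeff {R : Type*} [CommRing R] (n : ℕ) (f g : Polynomial R) (d : ℕ) : R :=
  ∑ i ∈ Finset.range n, ∑ j ∈ Finset.range n,
    if i + j = d then f.coeff i * g.coeff j else 0

lemma convCoeff_eq {R : Type*} [CommRing R] {n : ℕ} {f g : Polynomial R}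
    (hf : f.degree < n) (hg : g.degree < n) (d : ℕ) :
    convCoeff n f g d = (f * g).coeff d := by
  have hf' : ∀ i, n ≤ i → f.coeff i = 0 := fun i hi =>
    coeff_eq_zero_of_degree_lt (hf.trans_le (by exact_mod_cast hi))
  have hg' : ∀ i, n ≤ i → g.coeff i = 0 := fun i hi =>
    coeff_eq_zero_of_degree_lt (hg.trans_le (by exact_mod_cast hi))
  rw [coeff_mul, convCoeff]
  rw [← Finset.sum_product', ← Finset.sum_filter]
  refine Finset.sum_subset ?_ ?_
  · intro x hx
    simp only [Finset.mem_filter] at hx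
    exact Finset.HasAntidiagonal.mem_antidiagonal.mpr hx.2
  · intro x hx hx'
    simp only [Finset.HasAntidiagonal.mem_antidiagonal] at hx
    by_cases h1 : x.1 < n
    · by_cases h2 : x.2 < n
      · exact absurd (Finset.mem_filter.mpr
          ⟨Finset.mem_product.mpr ⟨Finset.mem_range.mpr h1, Finset.mem_range.mpr h2⟩, hx⟩) hx'
      · rw [hg' x.2 (le_of_not_gt h2), mul_zero]
    · rw [hf' x.1 (le_of_not_gt h1), zero_mul]

/-- For `n/2 < k ≤ n − 1`, the `k`-th coefficient of the product of `f` and `g` in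
`R[x]/(xⁿ − x^{n/2} + 1)` is `h_k = a_k + a_{k+n/2}`. -/
theorem coeff_mul_mod_high {R : Type*} [CommRing R] (n : ℕ) (hn : 2 ≤ n) (hne : Even n)
    (f g : Polynomial R) (hf : f.degree < n) (hg : g.degree < n)
    (k : ℕ) (hk₁ : n / 2 < k) (hk₂ : k ≤ n - 1) :
    ((f * g) %ₘ ((X : Polynomial R) ^ n - X ^ (n / 2) + 1)).coeff k
      = convCoeff n f g k + convCoeff n f g (k + n / 2) := by
  nontriviality R
  obtain ⟨m, hm2⟩ := hne
  have hnm : n = 2 * m := by omega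
  have hm : n / 2 = m := by omega
  have hm1 : 1 ≤ m := by omega
  rw [hm]
  set c : Polynomial R := f * g with hc
  -- coefficients of c vanish from 2n-1 on
  have hcd : ∀ d, 2 * n - 1 ≤ d → c.coeff d = 0 := by
    intro d hd
    rw [hc, coeff_mul]
    refine Finset.sum_eq_zero fun x hx => ?_
    simp only [Finset.HasAntidiagonal.mem_antidiagonal] at hx
    rcases (by omega : n ≤ x.1 ∨ n ≤ x.2) with h | h
    · rw [coeff_eq_zero_of_degree_lt (hf.trans_le (by exact_mod_cast h)), zero_mul]
    · rw [coeff_eq_zero_of_degree_lt (hg.trans_le (by exact_mod_cast h)), mul_zero]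
  set A := c %ₘ X ^ n with hA
  set B := c /ₘ X ^ n with hB
  have h1 : A + X ^ n * B = c := modByMonic_add_div c (X ^ n)
  set B0 := B %ₘ X ^ m with hB0
  set B1 := B /ₘ X ^ m with hB1
  have h2 : B0 + X ^ m * B1 = B := modByMonic_add_div B (X ^ m)
  have hdA : A.degree < (n : WithBot ℕ) := by
    simpa using degree_modByMonic_lt c (monic_X_pow n)
  have hdB0 : B0.degree < (m : WithBot ℕ) := by
    simpa using degree_modByMonic_lt B (monic_X_pow m)
  have hA0 : ∀ i, n ≤ i → A.coeff i = 0 := fun i hi =>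
    coeff_eq_zero_of_degree_lt (hdA.trans_le (by exact_mod_cast hi))
  have hB00 : ∀ i, m ≤ i → B0.coeff i = 0 := fun i hi =>
    coeff_eq_zero_of_degree_lt (hdB0.trans_le (by exact_mod_cast hi))
  -- coefficient facts
  have hAc : ∀ i, i < n → A.coeff i = c.coeff i := by
    intro i hi
    have := congrArg (fun p => Polynomial.coeff p i) h1
    simpa [coeff_X_pow_mul', Nat.not_le.mpr hi] using this
  have hBc : ∀ t, B.coeff t = c.coeff (n + t) := by
    intro t
    have := congrArg (fun p => Polynomial.coeff p (n + t)) h1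
    simp only [coeff_add, coeff_X_pow_mul'] at this
    rw [← this, hA0 _ (by omega)]
    simp
  have hB0B : ∀ t, t < m → B0.coeff t = B.coeff t := by
    intro t ht
    have := congrArg (fun p => Polynomial.coeff p t) h2
    simpa [coeff_X_pow_mul', Nat.not_le.mpr ht] using this
  have hB1B : ∀ t, B1.coeff t = B.coeff (m + t) := by
    intro t
    have := congrArg (fun p => Polynomial.coeff p (m + t)) h2
    simp only [coeff_add, coeff_X_pow_mul'] at this
    rw [← this, hB00 _ (by omega)]
    simp
  have hB1zero : ∀ t, m ≤ t → B1.coeff t = 0 := by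
    intro t ht
    rw [hB1B, hBc, hcd]
    omega
  -- the explicit remainder and quotient
  set r : Polynomial R := A + (X ^ m - 1) * B0 - B1 with hr
  set q : Polynomial R := B + B1 with hq
  have hrbig : ∀ j, n ≤ j → r.coeff j = 0 := by
    intro j hj
    rw [hr]
    simp only [coeff_sub, coeff_add, sub_mul, one_mul, coeff_X_pow_mul']
    rw [if_pos (by omega : m ≤ j)]
    rw [hA0 j hj, hB00 j (by omega), hB00 (j - m) (by omega), hB1zero j (by omega)]
    ring
  have hdr : r.degree < (n : WithBot ℕ) := by
    rw [degree_lt_iff_coeff_zero]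
    intro j hj
    exact hrbig j (by exact_mod_cast hj)
  -- p is monic of degree n
  have hp : ((X : Polynomial R) ^ n - X ^ m + 1) = X ^ n + (1 - X ^ m) := by ring
  have hdsmall : (1 - X ^ m : Polynomial R).degree < (n : WithBot ℕ) := by
    have : (1 - X ^ m : Polynomial R) = -(X ^ m - C 1) := by rw [C_1]; ring
    rw [this, degree_neg, degree_X_pow_sub_C hm1]
    exact_mod_cast (by omega : m < n)
  have hmonic : ((X : Polynomial R) ^ n - X ^ m + 1).Monic := by
    rw [hp]
    exact monic_X_pow_add (by simpa using hdsmall)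
  have hdegp : ((X : Polynomial R) ^ n - X ^ m + 1).degree = (n : WithBot ℕ) := by
    rw [hp, degree_add_eq_left_of_degree_lt (by simpa [degree_X_pow] using hdsmall),
      degree_X_pow]
  -- the key algebraic identity
  have key : r + ((X : Polynomial R) ^ n - X ^ m + 1) * q = c := by
    rw [hr, hq, ← h1, ← h2, hnm]
    ring
  have hmod : c %ₘ ((X : Polynomial R) ^ n - X ^ m + 1) = r :=
    (div_modByMonic_unique q r hmonic ⟨key, hdegp ▸ hdr⟩).2
  rw [hmod, hr]
  have hkm : m ≤ k := by omega
  have hkn : k < n := by omega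
  simp only [coeff_sub, coeff_add, sub_mul, one_mul, coeff_X_pow_mul']
  rw [if_pos hkm]
  rw [hAc k hkn, hB00 k hkm, hB1zero k hkm,
    hB0B (k - m) (by omega), hBc, (by omega : n + (k - m) = k + m),
    convCoeff_eq hf hg, convCoeff_eq hf hg]
  ring
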